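/- Let p be a prime, and write a positive integer d as d = α·p + β with 0 ≤ β ≤ p−1 and β ≥ 1. Then for any ℓ ∈ ℤ, in 𝔽_p[x,t]: ∏_{k=1}^{d−1} (x + (ℓ−k)·t) = (x^p − t^{p−1}·x)^α · ∏_{j=1}^{β−1} (x + (ℓ−j)·t). -/
import Mathlib

open MvPolynomial Finset

section Aux
variable (p : ℕ) [Fact p.Prime]

/-- The one(outer)-variable identity in `𝔽_p[t][x]`. -/
lemma aux_polyA :
    (∏ c : ZMod p, (Polynomial.X - Polynomial.C (Polynomial.C c * Polynomial.X))
      : Polynomial (Polynomial (ZMod p)))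
    = Polynomial.X ^ p - Polynomial.C (Polynomial.X ^ (p - 1)) * Polynomial.X := by
  have hp : p.Prime := Fact.out
  set q : Polynomial (Polynomial (ZMod p)) :=
    Polynomial.C (Polynomial.X ^ (p - 1) : Polynomial (ZMod p)) * Polynomial.X with hq
  have hp2 : 2 ≤ p := hp.two_le
  have hqdeg : q.degree < (p : ℕ) := by
    have h1 : q.degree ≤ 1 := by
      simpa [q] using Polynomial.degree_C_mul_X_le (Polynomial.X ^ (p - 1) : Polynomial (ZMod p))
    refine lt_of_le_of_lt h1 ?_
    exact_mod_cast Nat.lt_of_lt_of_le one_lt_two hp2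
  have hRmonic : (Polynomial.X ^ p - q :
      Polynomial (Polynomial (ZMod p))).Monic := Polynomial.monic_X_pow_sub hqdeg
  have hRdeg : (Polynomial.X ^ p - q : Polynomial (Polynomial (ZMod p))).degree = p := by
    rw [Polynomial.degree_sub_eq_left_of_degree_lt]
    · exact Polynomial.degree_X_pow p
    · rw [Polynomial.degree_X_pow]; exact hqdeg
  have hR0 : (Polynomial.X ^ p - q : Polynomial (Polynomial (ZMod p))) ≠ 0 := by
    intro h; rw [h] at hRdeg; simp at hRdeg
  -- L is monic of degree p
  have hLmonic : (∏ c : ZMod p, (Polynomial.X - Polynomial.C (Polynomial.C c * Polynomial.X))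
      : Polynomial (Polynomial (ZMod p))).Monic :=
    Polynomial.monic_prod_of_monic _ _ fun c _ => Polynomial.monic_X_sub_C _
  have hLdeg : (∏ c : ZMod p, (Polynomial.X - Polynomial.C (Polynomial.C c * Polynomial.X))
      : Polynomial (Polynomial (ZMod p))).natDegree = p := by
    rw [Polynomial.natDegree_prod]
    · simp only [Polynomial.natDegree_X_sub_C]
      simp [ZMod.card]
    · intro c _; exact (Polynomial.monic_X_sub_C _).ne_zero
  -- divisibility
  have hinj : Function.Injective
      (fun c : ZMod p => Polynomial.C c * Polynomial.X : ZMod p → Polynomial (ZMod p)) := by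
    intro a b hab
    have := congrArg (fun r => Polynomial.coeff r 1) hab
    simpa using this
  have hdvd : (∏ c : ZMod p, (Polynomial.X - Polynomial.C (Polynomial.C c * Polynomial.X))
      : Polynomial (Polynomial (ZMod p))) ∣ Polynomial.X ^ p - q := by
    have hle : (Finset.univ.val.map
        (fun c : ZMod p => Polynomial.C c * Polynomial.X)) ≤
        (Polynomial.X ^ p - q : Polynomial (Polynomial (ZMod p))).roots := by
      rw [Multiset.le_iff_subset (Finset.univ.nodup.map hinj)]
      intro a ha
      rw [Multiset.mem_map] at ha
      obtain ⟨c, _, rfl⟩ := ha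
      rw [Polynomial.mem_roots hR0]
      simp only [Polynomial.IsRoot, Polynomial.eval_sub, Polynomial.eval_pow,
        Polynomial.eval_X, Polynomial.eval_mul, Polynomial.eval_C, hq]
      rw [mul_pow, ← Polynomial.C_pow, ZMod.pow_card]
      ring_nf
      rw [mul_assoc, ← pow_succ', show p - 1 + 1 = p from by omega]
      ring
    have := (Multiset.prod_X_sub_C_dvd_iff_le_roots hR0 _).2 hle
    rw [Multiset.map_map] at this
    rw [Finset.prod_eq_multiset_prod]
    exact this
  -- conclude
  have hLdeg' : (∏ c : ZMod p, (Polynomial.X - Polynomial.C (Polynomial.C c * Polynomial.X))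
      : Polynomial (Polynomial (ZMod p))).degree = p := by
    rw [Polynomial.degree_eq_natDegree hLmonic.ne_zero, hLdeg]
  have key := Polynomial.eq_zero_of_dvd_of_degree_lt (dvd_sub hdvd dvd_rfl) ?_
  · exact (sub_eq_zero.mp key).symm
  · have := Polynomial.degree_sub_lt (hRdeg.trans hLdeg'.symm) hR0
      (hRmonic.leadingCoeff.trans hLmonic.leadingCoeff.symm)
    rwa [hRdeg, ← hLdeg'] at this

/-- Pushed to `MvPolynomial (Fin 2) (ZMod p)`. -/
lemma aux_mvA :
    (∏ c : ZMod p, (X 0 + C c * X 1) : MvPolynomial (Fin 2) (ZMod p))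
      = X 0 ^ p - X 1 ^ (p - 1) * X 0 := by
  have h := aux_polyA p
  let ψ : Polynomial (Polynomial (ZMod p)) →+* MvPolynomial (Fin 2) (ZMod p) :=
    Polynomial.eval₂RingHom (Polynomial.eval₂RingHom MvPolynomial.C (X 1)) (X 0)
  have h2 := congrArg ψ h
  simp only [ψ, map_prod, map_sub, map_pow, map_mul, Polynomial.coe_eval₂RingHom,
    Polynomial.eval₂_X, Polynomial.eval₂_C] at h2
  rw [← h2]
  exact Fintype.prod_equiv (Equiv.neg (ZMod p)) _ _ (fun c => by
    simp only [Equiv.neg_apply, map_neg]; ring)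

/-- Reindexing a product over `range p` as a product over `ZMod p`. -/
lemma aux_range {M : Type*} [CommMonoid M] (g : ZMod p → M) :
    ∏ i ∈ Finset.range p, g (i : ZMod p) = ∏ c : ZMod p, g c := by
  have hp : p.Prime := Fact.out
  haveI : NeZero p := ⟨hp.ne_zero⟩
  refine Finset.prod_nbij' (fun i => ((i : ℕ) : ZMod p)) (fun c => c.val) ?_ ?_ ?_ ?_ ?_
  · intro a _; exact Finset.mem_univ _
  · intro c _; exact Finset.mem_range.2 (ZMod.val_lt c)
  · intro a ha; exact ZMod.val_cast_of_lt (Finset.mem_range.1 ha)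
  · intro c _; exact ZMod.natCast_rightInverse c
  · intro a _; rfl

/-- Any block of `p` consecutive factors gives the additive polynomial. -/
lemma aux_block (a : ℕ) (ℓ : ℤ) :
    (∏ k ∈ Finset.Ico a (a + p), (X 0 + C ((ℓ - (k : ℤ) : ℤ) : ZMod p) * X 1)
      : MvPolynomial (Fin 2) (ZMod p)) = X 0 ^ p - X 1 ^ (p - 1) * X 0 := by
  rw [Finset.prod_Ico_eq_prod_range]
  set m : ZMod p := ((ℓ - (a : ℤ) : ℤ) : ZMod p) with hm
  have step1 : (∏ i ∈ Finset.range (a + p - a),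
        (X 0 + C ((ℓ - ((a + i : ℕ) : ℤ) : ℤ) : ZMod p) * X 1)
        : MvPolynomial (Fin 2) (ZMod p))
      = ∏ i ∈ Finset.range p, (X 0 + C (m - ((i : ℕ) : ZMod p)) * X 1) := by
    rw [show a + p - a = p from by omega]
    refine Finset.prod_congr rfl fun i _ => ?_
    congr 1
    congr 1
    push_cast [hm]
    ring
  rw [step1, aux_range p (fun c => X 0 + C (m - c) * X 1)]
  rw [show (∏ c : ZMod p, (X 0 + C (m - c) * X 1) : MvPolynomial (Fin 2) (ZMod p))
      = ∏ c : ZMod p, (X 0 + C c * X 1) from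
    Fintype.prod_equiv (Equiv.subLeft m) _ _ (fun c => rfl)]
  exact aux_mvA p

end Aux

/-- For a prime `p`, `d = α·p + β` with `1 ≤ β ≤ p-1`, and any `ℓ ∈ ℤ`, in `𝔽_p[x,t]`:
`∏_{k=1}^{d-1} (x + (ℓ-k)·t) = (x^p - t^{p-1}·x)^α · ∏_{j=1}^{β-1} (x + (ℓ-j)·t)`. -/
theorem prod_linear_factors_split (p : ℕ) (hp : p.Prime) (d α β : ℕ)
    (hd : d = α * p + β) (hβ1 : 1 ≤ β) (hβ2 : β ≤ p - 1) (ℓ : ℤ) :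
    (∏ k ∈ Finset.Icc 1 (d - 1),
        (X 0 + C ((ℓ - (k : ℤ) : ℤ) : ZMod p) * X 1)
          : MvPolynomial (Fin 2) (ZMod p))
      = (X 0 ^ p - X 1 ^ (p - 1) * X 0) ^ α *
          ∏ j ∈ Finset.Icc 1 (β - 1),
            (X 0 + C ((ℓ - (j : ℤ) : ℤ) : ZMod p) * X 1) := by
  haveI := Fact.mk hp
  induction α generalizing d with
  | zero =>
    simp only [Nat.zero_mul, Nat.zero_add] at hd
    subst hd
    rw [pow_zero, one_mul]
  | succ n ih =>
    have hp1 : 1 ≤ p := hp.pos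
    set d' := n * p + β with hd'
    have h1 : 1 ≤ d' := by omega
    have hdd : d = d' + p := by rw [hd, hd']; ring
    have hIcc : Finset.Icc 1 (d - 1) = Finset.Ico 1 d := by
      rw [← Finset.Ico_add_one_right_eq_Icc]; congr 1; omega
    have hIcc' : Finset.Icc 1 (d' - 1) = Finset.Ico 1 d' := by
      rw [← Finset.Ico_add_one_right_eq_Icc]; congr 1; omega
    rw [hIcc, ← Finset.prod_Ico_consecutive _ h1 (show d' ≤ d by omega)]
    rw [show d = d' + p from hdd, aux_block p d' ℓ]
    rw [← hIcc', ih d' rfl]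
    ring
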